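/- Let (G, ψ) be an ordered graph, 𝒫 a partition of V(G), G_𝒫 any graph with vertex set 𝒫, and r a positive integer. Let G_𝒫^r denote the r-th power of G_𝒫, i.e., the graph on 𝒫 in which two distinct parts are adjacent exactly when their distance in G_𝒫 is at most r. Then str(𝒫, G_𝒫^r) ≤ (str(𝒫, G_𝒫) + 1)^r. -/

import Mathlib

open SimpleGraph

/-- The convex closure (span) of a set of vertices in a linearly ordered vertex set. -/
def conv {V : Type*} [LinearOrder V] (X : Set V) : Set V :=
  {v | ∃ a ∈ X, ∃ b ∈ X, a ≤ v ∧ v ≤ b}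

/-- The `r`-th power of a graph: two distinct vertices are adjacent exactly when they
are joined by a walk of length at most `r`. -/
def powerGraph {α : Type*} (H : SimpleGraph α) (r : ℕ) : SimpleGraph α where
  Adj x y := x ≠ y ∧ ∃ w : H.Walk x y, w.length ≤ r
  symm := by
    constructor
    rintro x y ⟨hxy, w, hw⟩
    exact ⟨hxy.symm, w.reverse, by simpa using hw⟩
  loopless := by
    constructor
    rintro x ⟨hx, -⟩
    exact hx rfl

/-- The `H`-stretch of a part `X` of the partition `Prt` (w.r.t. the vertex ordering):
the number of parts whose span meets the span of the union of the closed
`H`-neighborhood of `X`. -/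
noncomputable def strOf {V : Type*} [LinearOrder V] (Prt : Set (Set V))
    (H : SimpleGraph ↥Prt) (X : ↥Prt) : ℕ :=
  {Y : ↥Prt | (conv (Y : Set V) ∩
    conv (⋃ Z ∈ {Z : ↥Prt | Z = X ∨ H.Adj X Z}, (Z : Set V))).Nonempty}.ncard

/-- The stretch `str(Prt, H)`: the maximum `H`-stretch of a part of `Prt`. -/
noncomputable def strP {V : Type*} [LinearOrder V] (Prt : Set (Set V))
    (H : SimpleGraph ↥Prt) : ℕ :=
  sSup (Set.range (strOf Prt H))

/-! ### Auxiliary development -/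

section Aux

variable {V : Type*} [LinearOrder V]

/-- The interference set of a part. -/
def InterS (Prt : Set (Set V)) (H : SimpleGraph ↥Prt) (X : ↥Prt) : Set ↥Prt :=
  {Y : ↥Prt | (conv (Y : Set V) ∩
    conv (⋃ Z ∈ {Z : ↥Prt | Z = X ∨ H.Adj X Z}, (Z : Set V))).Nonempty}

lemma strOf_eq_ncard (Prt : Set (Set V)) (H : SimpleGraph ↥Prt) (X : ↥Prt) :
    strOf Prt H X = (InterS Prt H X).ncard := rfl

/-- Iterated interference sets. -/
def Ik (Prt : Set (Set V)) (H : SimpleGraph ↥Prt) : ℕ → ↥Prt → Set ↥Prt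
  | 0, X => {X}
  | (k+1), X => ⋃ W ∈ Ik Prt H k X, InterS Prt H W

/-- The union of all parts within walk-distance `k` of `X`. -/
def JU (Prt : Set (Set V)) (H : SimpleGraph ↥Prt) (k : ℕ) (X : ↥Prt) : Set V :=
  ⋃ Z ∈ {Z : ↥Prt | ∃ w : H.Walk X Z, w.length ≤ k}, (Z : Set V)

variable {Prt : Set (Set V)} {H : SimpleGraph ↥Prt}

lemma mem_interS_of_nb (hne : ∀ X : ↥Prt, (X : Set V).Nonempty) {X Z : ↥Prt}
    (h : Z = X ∨ H.Adj X Z) : Z ∈ InterS Prt H X := by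
  obtain ⟨a, ha⟩ := hne Z
  refine ⟨a, ⟨a, ha, a, ha, le_rfl, le_rfl⟩, ?_⟩
  have : a ∈ ⋃ W ∈ {W : ↥Prt | W = X ∨ H.Adj X W}, (W : Set V) :=
    Set.mem_biUnion h ha
  exact ⟨a, this, a, this, le_rfl, le_rfl⟩

lemma self_mem_interS (hne : ∀ X : ↥Prt, (X : Set V).Nonempty) (X : ↥Prt) :
    X ∈ InterS Prt H X :=
  mem_interS_of_nb hne (Or.inl rfl)

lemma Ik_mono (hne : ∀ X : ↥Prt, (X : Set V).Nonempty) :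
    ∀ k (X : ↥Prt), Ik Prt H k X ⊆ Ik Prt H (k + 1) X := by
  intro k
  induction k with
  | zero =>
    intro X Y hY
    rcases hY with rfl
    simp only [Ik]
    exact Set.mem_biUnion (Set.mem_singleton _) (self_mem_interS hne _)
  | succ k ih =>
    intro X Y hY
    simp only [Ik] at hY ⊢
    obtain ⟨W, hW, hYW⟩ := Set.mem_iUnion₂.mp hY
    exact Set.mem_biUnion (ih X hW) hYW

/-- Decompose a nonempty walk at its last edge. -/
lemma walk_last_edge {X Z : ↥Prt} (w : H.Walk X Z) (hw : w.length ≠ 0) :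
    ∃ (W : ↥Prt) (p : H.Walk X W), H.Adj W Z ∧ p.length + 1 = w.length := by
  have hrev : w.reverse.length = w.length := w.length_reverse
  cases hrev' : w.reverse with
  | nil =>
    rw [hrev'] at hrev
    simp at hrev
    exact absurd hrev.symm hw
  | @cons _ u _ h p =>
    refine ⟨u, p.reverse, h.symm, ?_⟩
    rw [hrev'] at hrev
    simpa using hrev

lemma walk_mem_Ik (hne : ∀ X : ↥Prt, (X : Set V).Nonempty) :
    ∀ k (X Z : ↥Prt), (∃ w : H.Walk X Z, w.length ≤ k) → Z ∈ Ik Prt H k X := by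
  intro k
  induction k with
  | zero =>
    rintro X Z ⟨w, hw⟩
    have : X = Z := w.eq_of_length_eq_zero (Nat.le_zero.mp hw)
    subst this
    simp [Ik]
  | succ k ih =>
    rintro X Z ⟨w, hw⟩
    by_cases hle : w.length ≤ k
    · exact Ik_mono hne k X (ih X Z ⟨w, hle⟩)
    · have hlen : w.length ≠ 0 := by omega
      obtain ⟨W, p, hadj, hp⟩ := walk_last_edge w hlen
      have hWmem : W ∈ Ik Prt H k X := ih X W ⟨p, by omega⟩
      simp only [Ik]
      exact Set.mem_biUnion hWmem (mem_interS_of_nb hne (Or.inr hadj))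

lemma mem_JU_of_walk {X Z : ↥Prt} {k : ℕ} {a : V} (ha : a ∈ (Z : Set V))
    (hw : ∃ w : H.Walk X Z, w.length ≤ k) : a ∈ JU Prt H k X :=
  Set.mem_biUnion hw ha

/-- Walks of length at most one characterize the closed neighborhood. -/
lemma JU_one (X : ↥Prt) :
    JU Prt H 1 X = ⋃ Z ∈ {Z : ↥Prt | Z = X ∨ H.Adj X Z}, (Z : Set V) := by
  have hset : {Z : ↥Prt | ∃ w : H.Walk X Z, w.length ≤ 1}
      = {Z : ↥Prt | Z = X ∨ H.Adj X Z} := by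
    ext Z
    constructor
    · rintro ⟨w, hw⟩
      cases w with
      | nil => exact Or.inl rfl
      | cons h p =>
        simp only [Walk.length_cons, Nat.add_le_add_iff_right, Nat.le_zero] at hw
        have := p.eq_of_length_eq_zero (by omega)
        subst this
        exact Or.inr h
    · rintro (rfl | h)
      · exact ⟨Walk.nil, by simp⟩
      · exact ⟨Walk.cons h Walk.nil, by simp⟩
  unfold JU
  rw [hset]

/-- Main structural claim: a part interfering with `X` through parts within distance
`k+1` lies in the `(k+1)`-st iterated interference set. -/
lemma interferes_mem_Ik (hne : ∀ X : ↥Prt, (X : Set V).Nonempty) :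
    ∀ k (X Y : ↥Prt), (conv (Y : Set V) ∩ conv (JU Prt H (k + 1) X)).Nonempty →
      Y ∈ Ik Prt H (k + 1) X := by
  intro k
  induction k with
  | zero =>
    intro X Y hY
    rw [JU_one] at hY
    have : Y ∈ InterS Prt H X := hY
    simp only [Ik]
    exact Set.mem_biUnion (Set.mem_singleton _) this
  | succ k ih =>
    rintro X Y ⟨v, hvY, hvJ⟩
    by_cases hc : (conv (Y : Set V) ∩ conv (JU Prt H (k + 1) X)).Nonempty
    · exact Ik_mono hne (k + 1) X (ih X Y hc)
    · have hvnot : v ∉ conv (JU Prt H (k + 1) X) := fun h => hc ⟨v, hvY, h⟩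
      obtain ⟨a, haU, b, hbU, hav, hvb⟩ := hvJ
      -- a ∈ part Za at distance ≤ k+2, b ∈ part Zb at distance ≤ k+2
      obtain ⟨Za, hZa, haZa⟩ := Set.mem_iUnion₂.mp haU
      obtain ⟨Zb, hZb, hbZb⟩ := Set.mem_iUnion₂.mp hbU
      by_cases hlow : ∀ p ∈ JU Prt H (k + 1) X, v < p
      · -- v is below everything within distance k+1
        obtain ⟨w, hwlen⟩ := hZa
        by_cases hle : w.length ≤ k + 1
        · exact absurd (hlow a (mem_JU_of_walk haZa ⟨w, hle⟩)) (not_lt.mpr hav)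
        · obtain ⟨W, p, hadj, hp⟩ := walk_last_edge w (by omega)
          have hWIk : W ∈ Ik Prt H (k + 1) X := walk_mem_Ik hne (k + 1) X W ⟨p, by omega⟩
          obtain ⟨w0, hw0⟩ := hne W
          have hw0J : w0 ∈ JU Prt H (k + 1) X := mem_JU_of_walk hw0 ⟨p, by omega⟩
          have hYW : Y ∈ InterS Prt H W := by
            refine ⟨v, hvY, a, Set.mem_biUnion (Or.inr hadj) haZa,
              w0, Set.mem_biUnion (Or.inl rfl) hw0, hav, (hlow w0 hw0J).le⟩
          simp only [Ik]
          exact Set.mem_biUnion hWIk hYW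
      · -- then v is above everything within distance k+1
        push_neg at hlow
        obtain ⟨p0, hp0J, hp0v⟩ := hlow
        have hhigh : ∀ q ∈ JU Prt H (k + 1) X, q < v := by
          intro q hq
          by_contra hqv
          push_neg at hqv
          exact hvnot ⟨p0, hp0J, q, hq, hp0v, hqv⟩
        obtain ⟨w, hwlen⟩ := hZb
        by_cases hle : w.length ≤ k + 1
        · exact absurd (hhigh b (mem_JU_of_walk hbZb ⟨w, hle⟩)) (not_lt.mpr hvb)
        · obtain ⟨W, p, hadj, hp⟩ := walk_last_edge w (by omega)
          have hWIk : W ∈ Ik Prt H (k + 1) X := walk_mem_Ik hne (k + 1) X W ⟨p, by omega⟩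
          obtain ⟨w0, hw0⟩ := hne W
          have hw0J : w0 ∈ JU Prt H (k + 1) X := mem_JU_of_walk hw0 ⟨p, by omega⟩
          have hYW : Y ∈ InterS Prt H W := by
            refine ⟨v, hvY, w0, Set.mem_biUnion (Or.inl rfl) hw0,
              b, Set.mem_biUnion (Or.inr hadj) hbZb, (hhigh w0 hw0J).le, hvb⟩
          simp only [Ik]
          exact Set.mem_biUnion hWIk hYW

lemma ncard_biUnion_le {α β : Type*} [Finite β] {A : Set α} (hA : A.Finite)
    (f : α → Set β) (m : ℕ) (hf : ∀ a, (f a).ncard ≤ m) :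
    (⋃ a ∈ A, f a).ncard ≤ A.ncard * m := by
  refine Set.Finite.induction_on (motive := fun A _ => (⋃ a ∈ A, f a).ncard ≤ A.ncard * m) A hA (by simp) ?_
  rintro a s ha hs ih
  rw [Set.biUnion_insert, Set.ncard_insert_of_notMem ha hs]
  calc (f a ∪ ⋃ x ∈ s, f x).ncard ≤ (f a).ncard + (⋃ x ∈ s, f x).ncard :=
        Set.ncard_union_le _ _
    _ ≤ m + s.ncard * m := Nat.add_le_add (hf a) ih
    _ ≤ (s.ncard + 1) * m := by ring_nf; omega

lemma strOf_le_strP [Finite ↥Prt] (X : ↥Prt) : strOf Prt H X ≤ strP Prt H :=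
  le_csSup (Set.Finite.bddAbove (Set.finite_range _)) ⟨X, rfl⟩

lemma ncard_Ik_le [Finite ↥Prt] :
    ∀ k (X : ↥Prt), (Ik Prt H k X).ncard ≤ (strP Prt H) ^ k := by
  intro k
  induction k with
  | zero => intro X; simp [Ik]
  | succ k ih =>
    intro X
    simp only [Ik]
    calc (⋃ W ∈ Ik Prt H k X, InterS Prt H W).ncard
        ≤ (Ik Prt H k X).ncard * strP Prt H :=
          ncard_biUnion_le (Set.toFinite _) _ _
            (fun W => le_of_eq_of_le (strOf_eq_ncard Prt H W).symm (strOf_le_strP W))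
      _ ≤ (strP Prt H) ^ k * strP Prt H := Nat.mul_le_mul_right _ (ih X)
      _ = (strP Prt H) ^ (k + 1) := (pow_succ _ _).symm

end Aux

theorem stmt12 {V : Type*} [Fintype V] [LinearOrder V] (G : SimpleGraph V)
    (Prt : Set (Set V)) (hpart : Setoid.IsPartition Prt)
    (H : SimpleGraph ↥Prt) (r : ℕ) (hr : 0 < r) :
    strP Prt (powerGraph H r) ≤ (strP Prt H + 1) ^ r := by
  have hne : ∀ X : ↥Prt, (X : Set V).Nonempty := fun X =>
    Set.nonempty_iff_ne_empty.mpr (fun h => hpart.1 (h ▸ X.2))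
  apply csSup_le'
  rintro _ ⟨X, rfl⟩
  -- the closed neighborhood in the power graph is the ball of radius r
  have hset : {Z : ↥Prt | Z = X ∨ (powerGraph H r).Adj X Z}
      = {Z : ↥Prt | ∃ w : H.Walk X Z, w.length ≤ r} := by
    ext Z
    constructor
    · rintro (rfl | ⟨-, w, hw⟩)
      · exact ⟨Walk.nil, by simpa using hr⟩
      · exact ⟨w, hw⟩
    · rintro ⟨w, hw⟩
      by_cases hZX : Z = X
      · exact Or.inl hZX
      · exact Or.inr ⟨fun h => hZX h.symm, w, hw⟩
  have hsub : InterS Prt (powerGraph H r) X ⊆ Ik Prt H r X := by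
    intro Y hY
    obtain ⟨k, rfl⟩ : ∃ k, r = k + 1 := ⟨r - 1, (Nat.succ_pred_eq_of_pos hr).symm⟩
    apply interferes_mem_Ik hne k X Y
    have : JU Prt H (k + 1) X
        = ⋃ Z ∈ {Z : ↥Prt | Z = X ∨ (powerGraph H (k + 1)).Adj X Z}, (Z : Set V) := by
      unfold JU; rw [hset]
    rw [this]
    exact hY
  calc strOf Prt (powerGraph H r) X = (InterS Prt (powerGraph H r) X).ncard :=
        strOf_eq_ncard _ _ _
    _ ≤ (Ik Prt H r X).ncard := Set.ncard_le_ncard hsub (Set.toFinite _)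
    _ ≤ (strP Prt H) ^ r := ncard_Ik_le r X
    _ ≤ (strP Prt H + 1) ^ r := Nat.pow_le_pow_left (Nat.le_succ _) r
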